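/- For all nonzero raiz θ, θ₁, θ₂ and all i ∈ ℤ/nℤ the following operator identities hold on N: [E(θ₁), B(θ₂)] = 0; [E(θ), 𝔅_i] = 0; [E(θ₁), x_{θ₂}·] = x_{θ₂⌣θ₁}·; [B(θ₁), x_{θ₂}·] = x_{θ₁⌣θ₂}·; and [𝔅_i, x_θ·] equals x_θ· if θ begins at i+1 and equals 0 otherwise (here x_ϑ· denotes multiplication by x_ϑ, and a term with undefined concatenation is 0). -/

import Mathlib

/-!
Common setup: raiz for the cyclic quiver `Ã_{n-1}`, the polynomial algebra
`N = ℚ[x_θ : θ ∈ R⁺(n)]`, and the locally finite differential operators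
`E(θ)`, `Ẽ(θ)`, `B(θ)`, `𝔅_i`, `𝔈_i`, `Δ_i`, and the Chevalley operators
`e_i^T`, `h_i^T`, `f_i^T`, following Finkelberg–Kuznetsov.
-/

open MvPolynomial

/-- A raiz for the cyclic quiver with `n` vertices: a pair `(p,q)` of integers with
`p ≤ q`, modulo simultaneous translation of both entries by `n`; it is faithfully
encoded by the ending class `q mod n : ZMod n` together with the (positive) length
`q - p + 1 : ℕ+`. -/
abbrev Raiz (n : ℕ) : Type := ZMod n × ℕ+

namespace Raiz

variable {n : ℕ}

/-- The class at which a raiz begins: for `(p,q)` this is `p mod n = (q - len + 1) mod n`. -/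
def beg (θ : Raiz n) : ZMod n := θ.1 - ((θ.2 : ℕ) : ZMod n) + 1

/-- `θ = (p,q)` ends at `i` iff `q ≡ i (mod n)`. -/
def Ends (θ : Raiz n) (i : ZMod n) : Prop := θ.1 = i

/-- `θ = (p,q)` begins at `i` iff `p ≡ i (mod n)`. -/
def Begins (θ : Raiz n) (i : ZMod n) : Prop := beg θ = i

/-- The simple raiz `(i,i)`. -/
def simple (i : ZMod n) : Raiz n := (i, 1)

/-- The concatenation `ϑ⌣θ`: it is defined (`some`) exactly when `θ` begins at the
class following the class at which `ϑ` ends; for `ϑ = (a,b)` ending at `i-1` and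
`θ = (p,q)` beginning at `i` it is `(a, b+q-p+1)`, i.e. it ends where `θ` ends and
its length is the sum of the lengths. -/
def cat (ϑ θ : Raiz n) : Option (Raiz n) :=
  if beg θ = ϑ.1 + 1 then some (θ.1, ϑ.2 + θ.2) else none

/-- `dimAt θ j` is the number of integers in `[p,q]` congruent to `j` mod `n`:
the dimension vector `dim θ ∈ ℕ^{ℤ/nℤ}` of the raiz `θ`. -/
def dimAt (θ : Raiz n) (j : ZMod n) : ℕ :=
  ((Finset.range (θ.2 : ℕ)).filter (fun t => θ.1 - ((t : ℕ) : ZMod n) = j)).card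

end Raiz

/-- The polynomial algebra `N = ℚ[x_θ : θ ∈ R⁺(n)]`. -/
abbrev Pol (n : ℕ) := MvPolynomial (Raiz n) ℚ

/-- Operators on `N`. -/
abbrev Op (n : ℕ) := Pol n → Pol n

noncomputable section

/-- The locally finite differential operator `Σ_η c(η)·∂/∂x_η`: applied to a
polynomial `P` only the (finitely many) variables occurring in `P` contribute,
since `∂P/∂x_η = 0` for `η ∉ vars P`. -/
def diffOp {n : ℕ} (c : Raiz n → Pol n) : Op n :=
  fun P => ∑ η ∈ P.vars, c η * pderiv η P

/-- `Ẽ(θ) = Σ_{ϑ ∈ E_{i-1}} x_ϑ ∂/∂x_{ϑ⌣θ}` for a raiz `θ` beginning at `i`: the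
term `ϑ = 0` contributes `∂/∂x_θ` (as `x_0 = 1` and `0⌣θ = θ`), and a nonzero `ϑ`
ending at `i-1` contributes at the variable `η = ϑ⌣θ`, i.e. at `η` with the same
end as `θ` and `len η > len θ`, with coefficient `x_ϑ`, where
`ϑ = (beg θ - 1, len η - len θ)`. -/
def Etil {n : ℕ} (θ : Raiz n) : Op n :=
  diffOp (fun η =>
    if η = θ then 1
    else if η.1 = θ.1 ∧ θ.2 < η.2 then X ((Raiz.beg θ - 1, η.2 - θ.2) : Raiz n) else 0)

/-- `E(θ) = Σ_{ϑ ∈ E_{i-1}} x_{ϑ⌣θ} ∂/∂x_ϑ` for a raiz `θ` beginning at `i`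
(the `ϑ = 0` term vanishes since `∂/∂x_0 = 0`). -/
def Eop {n : ℕ} (θ : Raiz n) : Op n :=
  diffOp (fun ϑ => if ϑ.1 = Raiz.beg θ - 1 then X ((θ.1, ϑ.2 + θ.2) : Raiz n) else 0)

/-- `B(θ) = Σ_{ϑ ∈ B_{i+1}} x_{θ⌣ϑ} ∂/∂x_ϑ` for a raiz `θ` ending at `i`
(the `ϑ = 0` term vanishes since `∂/∂x_0 = 0`). -/
def Bop {n : ℕ} (θ : Raiz n) : Op n :=
  diffOp (fun ϑ => if Raiz.beg ϑ = θ.1 + 1 then X ((ϑ.1, θ.2 + ϑ.2) : Raiz n) else 0)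

/-- `𝔅_i = Σ_{0 ≠ θ ∈ B_{i+1}} x_θ ∂/∂x_θ`. -/
def Bfrak {n : ℕ} (i : ZMod n) : Op n :=
  diffOp (fun θ => if Raiz.beg θ = i + 1 then X θ else 0)

/-- `𝔈_i = Σ_{0 ≠ θ ∈ E_{i-1}} x_θ ∂/∂x_θ`. -/
def Efrak {n : ℕ} (i : ZMod n) : Op n :=
  diffOp (fun θ => if θ.1 = i - 1 then X θ else 0)

/-- The commutator `[f,g] = f∘g - g∘f` of two operators. -/
def brak {n : ℕ} (f g : Op n) : Op n := fun P => f (g P) - g (f P)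

/-- Multiplication by `x_θ` as an operator on `N`. -/
def mulX {n : ℕ} (θ : Raiz n) : Op n := fun P => X θ * P

/-- Extend a raiz-indexed family of operators to `Option (Raiz n)`: a term with
an undefined concatenation is declared to be `0`. -/
def opt {n : ℕ} (F : Raiz n → Op n) : Option (Raiz n) → Op n
  | none => 0
  | some θ => F θ

/-- `Δ_i = 𝔅_{i-1} - 𝔅_i + c_i`, for a fixed family of constants `c`. -/
def Delta {n : ℕ} (c : ZMod n → ℚ) (i : ZMod n) : Op n :=
  fun P => Bfrak (i - 1) P - Bfrak i P + c i • P

/-- The Chevalley operator `e_i^T = Ẽ(i)`. -/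
def eT {n : ℕ} (i : ZMod n) : Op n := Etil (Raiz.simple i)

/-- The Chevalley operator `h_i^T = 𝔈_{i+1} - 𝔈_i + Δ_i`. -/
def hT {n : ℕ} (c : ZMod n → ℚ) (i : ZMod n) : Op n :=
  fun P => Efrak (i + 1) P - Efrak i P + Delta c i P

/-- The Chevalley operator `f_i^T = B(i) - E(i) + x_i·Δ_i`. -/
def fT {n : ℕ} (c : ZMod n → ℚ) (i : ZMod n) : Op n :=
  fun P => Bop (Raiz.simple i) P - Eop (Raiz.simple i) P + X (Raiz.simple i) * Delta c i P

/-- The affine Cartan matrix of type `Ã_{n-1}` (for `n ≥ 2`): `a_ii = 2`;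
`a_ij = -1` if `j = i±1` and `n ≠ 2`; `a_ij = -2` if `n = 2` and `j = i+1 ≠ i`;
`a_ij = 0` otherwise. -/
def cartan (n : ℕ) (i j : ZMod n) : ℤ :=
  if j = i then 2
  else if n = 2 then -2
  else if j = i + 1 ∨ j = i - 1 then -1
  else 0

/-- The projection `ζ : R⁺(m) → R⁺(n)` for `n ∣ m`: the class of `(p,q)` modulo `m`
is sent to its class modulo `n`. -/
def Raiz.zetaR {n m : ℕ} (h : n ∣ m) : Raiz m → Raiz n :=
  fun θ => (ZMod.castHom h (ZMod n) θ.1, θ.2)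

/-- The induced `ℚ`-algebra homomorphism `ζ : ℚ[x_ϑ : ϑ ∈ R⁺(m)] → ℚ[x_θ : θ ∈ R⁺(n)]`,
`x_ϑ ↦ x_{ζ(ϑ)}`. -/
def zeta {n m : ℕ} (h : n ∣ m) : Pol m →ₐ[ℚ] Pol n :=
  MvPolynomial.rename (Raiz.zetaR h)

/-- The natural-number representatives in `[0, m)` of the residues `≡ i (mod n)`:
for `n ∣ m` these enumerate (via `ℕ → ZMod m`) exactly the classes `j ∈ ℤ/mℤ` with
`j ≡ i (mod n)`. -/
def fiber (n m : ℕ) (i : ZMod n) : Finset ℕ :=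
  (Finset.range m).filter (fun t => ((t : ZMod n) = i))

/-- All raiz of level `n` with length at most `m`. -/
def raizUpTo (n m : ℕ) : Finset (Raiz n) :=
  ((Finset.range n).image (fun a : ℕ => ((a : ZMod n)))) ×ˢ
    ((Finset.range m).image (fun l : ℕ => (⟨l + 1, Nat.succ_pos l⟩ : ℕ+)))

open Classical in
/-- Kostant partitions of the dimension vector `γ`, as multisets `κ` of raiz with
`Σ_{θ ∈ κ} dim θ = γ`; the parameter `m` bounds the lengths of parts and the
multiplicities, so for `Σ_j γ(j) ≤ m` this is the set of all Kostant partitions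
of `γ`. -/
def kostant (n : ℕ) (γ : ZMod n → ℕ) (m : ℕ) : Finset (Multiset (Raiz n)) :=
  ((m • (raizUpTo n m).val).powerset.toFinset).filter
    (fun κ => ∀ j, (κ.map (fun θ => θ.dimAt j)).sum = γ j)

/-- The monomial `x^κ` attached to a Kostant partition `κ`. -/
def xPow {n : ℕ} (κ : Multiset (Raiz n)) : Pol n :=
  (κ.map (fun θ => (X θ : Pol n))).prod

/-- `P_n = Σ_{κ ∈ 𝔎(α_n)} (-1)^{K(κ)+1} x^κ`: the sum is over all Kostant partitions
of the all-ones dimension vector `α_n` (all of whose parts have length `≤ n` and which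
have at most `n` parts). -/
def Ppoly (n : ℕ) : Pol n :=
  ∑ κ ∈ kostant n (fun _ => 1) n, ((-1 : ℚ) ^ (Multiset.card κ + 1)) • xPow κ

open Classical in
/-- `a_p = Σ_{θ : dim θ = p·α_n} Ẽ(θ)` for `p ≥ 1` (a finite sum: such `θ` have
length `p·n`). -/
def aPos (n p : ℕ) : Op n :=
  fun P => ∑ θ ∈ (raizUpTo n (p * n)).filter (fun θ => ∀ j, θ.dimAt j = p), Etil θ P

/-- `a_{-p}`: `c₀` times the operator of multiplication by `ζ(P_{pn})`, for `p ≥ 1`. -/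
def aNeg (n : ℕ) (c₀ : ℚ) (p : ℕ) : Op n :=
  fun P => c₀ • (zeta (dvd_mul_left n p) (Ppoly (p * n)) * P)

end

section Aux
variable {n : ℕ}

open Classical in
lemma diffOp_eq_sum (c : Raiz n → Pol n) (P : Pol n) (S : Finset (Raiz n))
    (hS : P.vars ⊆ S) : diffOp c P = ∑ η ∈ S, c η * pderiv η P := by
  rw [diffOp, Finset.sum_subset hS]
  intro η _ hη
  rw [MvPolynomial.pderiv_eq_zero_of_notMem_vars hη, mul_zero]

lemma diffOp_add (c : Raiz n → Pol n) (P Q : Pol n) :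
    diffOp c (P + Q) = diffOp c P + diffOp c Q := by
  classical
  set S := P.vars ∪ Q.vars ∪ (P + Q).vars with hs
  rw [diffOp_eq_sum c (P+Q) S (by intro x hx; simp [hs, hx]), diffOp_eq_sum c P S (by intro x hx; simp [hs, hx]),
    diffOp_eq_sum c Q S (by intro x hx; simp [hs, hx]), ← Finset.sum_add_distrib]
  refine Finset.sum_congr rfl fun η _ => ?_
  rw [map_add, mul_add]

lemma diffOp_mul (c : Raiz n → Pol n) (P Q : Pol n) :
    diffOp c (P * Q) = diffOp c P * Q + P * diffOp c Q := by
  classical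
  set S := P.vars ∪ Q.vars ∪ (P * Q).vars with hs
  rw [diffOp_eq_sum c (P*Q) S (by intro x hx; simp [hs, hx]), diffOp_eq_sum c P S (by intro x hx; simp [hs, hx]),
    diffOp_eq_sum c Q S (by intro x hx; simp [hs, hx]), Finset.sum_mul, Finset.mul_sum,
    ← Finset.sum_add_distrib]
  refine Finset.sum_congr rfl fun η _ => ?_
  rw [MvPolynomial.pderiv_mul]
  ring

lemma diffOp_C (c : Raiz n → Pol n) (a : ℚ) : diffOp c (MvPolynomial.C a) = 0 := by
  rw [diffOp, MvPolynomial.vars_C, Finset.sum_empty]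

lemma diffOp_zero (c : Raiz n → Pol n) : diffOp c 0 = 0 := by
  simpa using diffOp_C c 0

lemma diffOp_X (c : Raiz n → Pol n) (ζ : Raiz n) : diffOp c (X ζ) = c ζ := by
  rw [diffOp, MvPolynomial.vars_X, Finset.sum_singleton, MvPolynomial.pderiv_X_self, mul_one]

lemma brak_diffOp_mulX (c : Raiz n → Pol n) (ϑ : Raiz n) :
    brak (diffOp c) (mulX ϑ) = fun P => c ϑ * P := by
  funext P
  simp only [brak, mulX, diffOp_mul, diffOp_X]
  ring

lemma brak_diffOp_eq_zero (f g : Raiz n → Pol n)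
    (h : ∀ ϑ, diffOp f (g ϑ) = diffOp g (f ϑ)) :
    brak (diffOp f) (diffOp g) = 0 := by
  funext P
  simp only [brak, Pi.zero_apply]
  rw [sub_eq_zero]
  induction P using MvPolynomial.induction_on with
  | C a => simp [diffOp_C, diffOp_zero]
  | add p q hp hq => simp only [diffOp_add, hp, hq]
  | mul_X p ϑ hp =>
      rw [diffOp_mul g p (X ϑ), diffOp_X, diffOp_add, diffOp_mul f (diffOp g p) (X ϑ),
        diffOp_mul f p (g ϑ), diffOp_X,
        diffOp_mul f p (X ϑ), diffOp_X, diffOp_add, diffOp_mul g (diffOp f p) (X ϑ),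
        diffOp_mul g p (f ϑ), diffOp_X, hp, h ϑ]
      ring

end Aux

open Classical in
/-- For all nonzero raiz `θ, θ₁, θ₂` and all `i ∈ ℤ/nℤ`: `[E(θ₁), B(θ₂)] = 0`;
`[E(θ), 𝔅_i] = 0`; `[E(θ₁), x_{θ₂}·] = x_{θ₂⌣θ₁}·`; `[B(θ₁), x_{θ₂}·] = x_{θ₁⌣θ₂}·`;
and `[𝔅_i, x_θ·]` equals `x_θ·` if `θ` begins at `i+1` and `0` otherwise
(a term with undefined concatenation being `0`). -/
theorem comm_lemma_three {n : ℕ} (hn : 2 ≤ n) (θ θ₁ θ₂ : Raiz n) (i : ZMod n) :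
    brak (Eop θ₁) (Bop θ₂) = 0 ∧
    brak (Eop θ) (Bfrak i) = 0 ∧
    brak (Eop θ₁) (mulX θ₂) = opt mulX (Raiz.cat θ₂ θ₁) ∧
    brak (Bop θ₁) (mulX θ₂) = opt mulX (Raiz.cat θ₁ θ₂) ∧
    brak (Bfrak i) (mulX θ) = (if θ.Begins (i + 1) then mulX θ else 0) := by
  classical
  refine ⟨?_, ?_, ?_, ?_, ?_⟩
  · apply brak_diffOp_eq_zero
    intro ϑ
    by_cases hb : Raiz.beg ϑ = θ₂.1 + 1 <;> by_cases he : ϑ.1 = Raiz.beg θ₁ - 1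
    · have hc : Raiz.beg ((θ₁.1, ϑ.2 + θ₁.2) : Raiz n) = θ₂.1 + 1 := by
        simp only [Raiz.beg, PNat.add_coe, Nat.cast_add] at hb he ⊢
        linear_combination hb - he
      simp only [if_pos hb, if_pos he, diffOp_X, he, hc, if_true, add_assoc]
    · simp only [if_pos hb, if_neg he, diffOp_X, diffOp_zero, he, if_false]
    · have hc : ¬ Raiz.beg ((θ₁.1, ϑ.2 + θ₁.2) : Raiz n) = θ₂.1 + 1 := by
        intro hcc
        apply hb
        simp only [Raiz.beg, PNat.add_coe, Nat.cast_add] at hcc he ⊢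
        linear_combination hcc + he
      simp only [if_neg hb, if_pos he, diffOp_zero, diffOp_X, hc, if_false]
    · simp only [if_neg hb, if_neg he, diffOp_zero]
  · apply brak_diffOp_eq_zero
    intro ϑ
    by_cases hb : Raiz.beg ϑ = i + 1 <;> by_cases he : ϑ.1 = Raiz.beg θ - 1
    · have hc : Raiz.beg ((θ.1, ϑ.2 + θ.2) : Raiz n) = i + 1 := by
        simp only [Raiz.beg, PNat.add_coe, Nat.cast_add] at hb he ⊢
        linear_combination hb - he
      simp only [if_pos hb, if_pos he, diffOp_X, he, hc, if_true]
    · simp only [if_pos hb, if_neg he, diffOp_X, diffOp_zero, he, if_false]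
    · have hc : ¬ Raiz.beg ((θ.1, ϑ.2 + θ.2) : Raiz n) = i + 1 := by
        intro hcc
        apply hb
        simp only [Raiz.beg, PNat.add_coe, Nat.cast_add] at hcc he ⊢
        linear_combination hcc + he
      simp only [if_neg hb, if_pos he, diffOp_zero, diffOp_X, hc, if_false]
    · simp only [if_neg hb, if_neg he, diffOp_zero]
  · simp only [Eop, brak_diffOp_mulX, Raiz.cat]
    by_cases h : Raiz.beg θ₁ = θ₂.1 + 1
    · rw [if_pos (show θ₂.1 = Raiz.beg θ₁ - 1 by rw [h]; ring), if_pos h]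
      rfl
    · rw [if_neg (show ¬θ₂.1 = Raiz.beg θ₁ - 1 from fun hc => h (by rw [hc]; ring)), if_neg h]
      funext P
      simp [opt]
  · simp only [Bop, brak_diffOp_mulX, Raiz.cat]
    by_cases h : Raiz.beg θ₂ = θ₁.1 + 1
    · rw [if_pos h, if_pos h]
      rfl
    · rw [if_neg h, if_neg h]
      funext P
      simp [opt]
  · simp only [Bfrak, brak_diffOp_mulX, Raiz.Begins]
    by_cases h : Raiz.beg θ = i + 1
    · rw [if_pos h]; refine Eq.trans ?_ (if_pos (show θ.Begins (i + 1) from h)).symm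
      rfl
    · rw [if_neg h]; refine Eq.trans ?_ (if_neg (show ¬θ.Begins (i + 1) from h)).symm
      funext P
      simp
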